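/- One-step quadratic contraction of the Newton step (the key estimate underlying Theorem 3's quadratic convergence rate): Let f : ℝⁿ → ℝ be of class C², let x̂ ∈ ℝⁿ satisfy ∇f(x̂) = 0, let H(x) denote the Hessian of f at x (the Fréchet derivative of the gradient map, a continuous linear map ℝⁿ → ℝⁿ), and assume: (i) H(x̂) is positive definite, i.e. ⟪H(x̂) v, v⟫ > 0 for all v ≠ 0; (ii) H is Lipschitz near x̂, i.e. there exist r > 0 and L > 0 with ‖H(x) − H(y)‖ ≤ L ‖x − y‖ in operator norm for all x, y in the closed ball of radius r around x̂. Then there exist δ > 0 and C > 0 such that for every x with ‖x − x̂‖ < δ there is a unique s ∈ ℝⁿ with H(x) s = ∇f(x), and the Newton iterate x⁺ = x − s satisfies ‖x⁺ − x̂‖ ≤ C ‖x − x̂‖². -/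

import Mathlib

open scoped RealInnerProductSpace

set_option maxHeartbeats 1000000 in
/-- One-step quadratic contraction of the Newton step: if f is C², ∇f(x̂) = 0, the Hessian
H(x) = D(∇f)(x) is positive definite at x̂ and Lipschitz (in operator norm) on a closed ball
around x̂, then there are δ > 0 and C > 0 such that for any x with ‖x − x̂‖ < δ the Newton
system H(x) s = ∇f(x) has a unique solution s, and x⁺ = x − s satisfies
‖x⁺ − x̂‖ ≤ C ‖x − x̂‖². -/
theorem newton_one_step_quadratic {n : ℕ} (f : EuclideanSpace ℝ (Fin n) → ℝ)
    (hf : ContDiff ℝ 2 f)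
    (xhat : EuclideanSpace ℝ (Fin n)) (hstat : gradient f xhat = 0)
    (hpos : ∀ v : EuclideanSpace ℝ (Fin n), v ≠ 0 →
      0 < ⟪fderiv ℝ (gradient f) xhat v, v⟫)
    (r L : ℝ) (hr : 0 < r) (hL : 0 < L)
    (hlip : ∀ x ∈ Metric.closedBall xhat r, ∀ y ∈ Metric.closedBall xhat r,
      ‖fderiv ℝ (gradient f) x - fderiv ℝ (gradient f) y‖ ≤ L * ‖x - y‖) :
    ∃ δ > 0, ∃ C > 0, ∀ x : EuclideanSpace ℝ (Fin n), ‖x - xhat‖ < δ →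
      (∃! s : EuclideanSpace ℝ (Fin n), fderiv ℝ (gradient f) x s = gradient f x) ∧
      ∀ s : EuclideanSpace ℝ (Fin n), fderiv ℝ (gradient f) x s = gradient f x →
        ‖x - s - xhat‖ ≤ C * ‖x - xhat‖ ^ 2 := by
  classical
  have _dummy : True := trivial
  set g : EuclideanSpace ℝ (Fin n) → EuclideanSpace ℝ (Fin n) := gradient f with hg_def
  set H : EuclideanSpace ℝ (Fin n) → EuclideanSpace ℝ (Fin n) →L[ℝ] EuclideanSpace ℝ (Fin n) := fun x => fderiv ℝ g x with hH_def
  -- g is C¹, hence differentiable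
  have hg1 : ContDiff ℝ 1 g := by
    have h1 : ContDiff ℝ 1 (fderiv ℝ f) := hf.fderiv_right (by norm_num)
    have : g = fun x => (InnerProductSpace.toDual ℝ (EuclideanSpace ℝ (Fin n))).symm (fderiv ℝ f x) := rfl
    rw [this]
    exact (InnerProductSpace.toDual ℝ (EuclideanSpace ℝ (Fin n))).symm.toContinuousLinearEquiv.contDiff.comp h1
  have hgdiff : Differentiable ℝ g := hg1.differentiable one_ne_zero
  -- T := Hessian at xhat, injective from positive definiteness
  set T : EuclideanSpace ℝ (Fin n) →L[ℝ] EuclideanSpace ℝ (Fin n) := H xhat with hT_def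
  have hTinj : Function.Injective T := by
    intro a b hab
    by_contra hne
    have h := hpos (a - b) (sub_ne_zero.mpr hne)
    rw [map_sub, hab, sub_self] at h
    simp at h
  -- T is bijective; build continuous linear equivalence
  have hbij : Function.Bijective (T : EuclideanSpace ℝ (Fin n) →ₗ[ℝ] EuclideanSpace ℝ (Fin n)) :=
    ⟨hTinj, LinearMap.injective_iff_surjective.mp hTinj⟩
  let eT : EuclideanSpace ℝ (Fin n) ≃L[ℝ] EuclideanSpace ℝ (Fin n) :=
    (LinearEquiv.ofBijective (T : EuclideanSpace ℝ (Fin n) →ₗ[ℝ] EuclideanSpace ℝ (Fin n)) hbij).toContinuousLinearEquiv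
  have heT : ∀ w, eT w = T w := fun w => rfl
  set K : ℝ := ‖(eT.symm : EuclideanSpace ℝ (Fin n) →L[ℝ] EuclideanSpace ℝ (Fin n))‖ + 1 with hK_def
  have hK1 : (1 : ℝ) ≤ K := le_add_of_nonneg_left (norm_nonneg _)
  have hK0 : (0 : ℝ) < K := lt_of_lt_of_le one_pos hK1
  have hKey : ∀ w : EuclideanSpace ℝ (Fin n), ‖w‖ ≤ K * ‖T w‖ := by
    intro w
    have h1 : ‖eT.symm (eT w)‖ ≤ ‖(eT.symm : EuclideanSpace ℝ (Fin n) →L[ℝ] EuclideanSpace ℝ (Fin n))‖ * ‖eT w‖ :=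
      (eT.symm : EuclideanSpace ℝ (Fin n) →L[ℝ] EuclideanSpace ℝ (Fin n)).le_opNorm _
    rw [eT.symm_apply_apply] at h1
    calc ‖w‖ ≤ ‖(eT.symm : EuclideanSpace ℝ (Fin n) →L[ℝ] EuclideanSpace ℝ (Fin n))‖ * ‖eT w‖ := h1
      _ ≤ K * ‖T w‖ := by
          rw [heT]
          exact mul_le_mul_of_nonneg_right (le_add_of_nonneg_right one_pos.le) (norm_nonneg _)
  -- choose δ and C
  refine ⟨min r (1 / (2 * K * L)), lt_min hr (by positivity), 4 * K * L, by positivity, ?_⟩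
  intro x hx
  have hxr : ‖x - xhat‖ < r := lt_of_lt_of_le hx (min_le_left _ _)
  have hxKL : ‖x - xhat‖ < 1 / (2 * K * L) := lt_of_lt_of_le hx (min_le_right _ _)
  have hxball : x ∈ Metric.closedBall xhat r := by
    rw [Metric.mem_closedBall, dist_eq_norm]; exact hxr.le
  have hhb : xhat ∈ Metric.closedBall xhat r := Metric.mem_closedBall_self hr.le
  -- lower bound for H x
  have hlow : ∀ w : EuclideanSpace ℝ (Fin n), ‖w‖ ≤ 2 * K * ‖H x w‖ := by
    intro w
    have h1 : ‖T w‖ ≤ ‖H x w‖ + ‖(T - H x) w‖ := by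
      have : T w = H x w + (T - H x) w := by simp
      rw [this]; exact norm_add_le _ _
    have h2 : ‖(T - H x) w‖ ≤ (L * ‖xhat - x‖) * ‖w‖ := by
      calc ‖(T - H x) w‖ ≤ ‖T - H x‖ * ‖w‖ := (T - H x).le_opNorm w
        _ ≤ (L * ‖xhat - x‖) * ‖w‖ :=
            mul_le_mul_of_nonneg_right (hlip xhat hhb x hxball) (norm_nonneg w)
    have h3 : L * ‖xhat - x‖ ≤ 1 / (2 * K) := by
      rw [norm_sub_rev]
      have h := hxKL.le
      rw [le_div_iff₀ (by positivity)] at h ⊢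
      calc L * ‖x - xhat‖ * (2 * K) = ‖x - xhat‖ * (2 * K * L) := by ring
        _ ≤ 1 := h
    have h4 : ‖w‖ ≤ K * ‖H x w‖ + K * ((1 / (2 * K)) * ‖w‖) := by
      calc ‖w‖ ≤ K * ‖T w‖ := hKey w
        _ ≤ K * (‖H x w‖ + (L * ‖xhat - x‖) * ‖w‖) := by
            apply mul_le_mul_of_nonneg_left _ hK0.le
            exact le_trans h1 (by linarith)
        _ = K * ‖H x w‖ + K * ((L * ‖xhat - x‖) * ‖w‖) := by ring
        _ ≤ K * ‖H x w‖ + K * ((1 / (2 * K)) * ‖w‖) := by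
            have := mul_le_mul_of_nonneg_right h3 (norm_nonneg w)
            nlinarith
    have : K * ((1 / (2 * K)) * ‖w‖) = ‖w‖ / 2 := by
      field_simp
    rw [this] at h4
    nlinarith [norm_nonneg (H x w)]
  have hHxinj : Function.Injective (H x) := by
    intro a b hab
    have : ‖a - b‖ ≤ 2 * K * ‖H x (a - b)‖ := hlow _
    rw [map_sub, hab, sub_self, norm_zero, mul_zero] at this
    have := norm_nonneg (a - b)
    have h0 : ‖a - b‖ = 0 := le_antisymm ‹‖a - b‖ ≤ 0› this
    rwa [norm_eq_zero, sub_eq_zero] at h0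
  have hHxsurj : Function.Surjective (H x) := by
    have h := LinearMap.injective_iff_surjective
      (f := ((H x).toLinearMap : EuclideanSpace ℝ (Fin n) →ₗ[ℝ] EuclideanSpace ℝ (Fin n)))
    exact h.mp hHxinj
  obtain ⟨s₀, hs₀⟩ := hHxsurj (g x)
  constructor
  · exact ⟨s₀, hs₀, fun y hy => hHxinj (hy.trans hs₀.symm)⟩
  · intro s hs
    -- Taylor estimate on the closed ball of radius ‖x - xhat‖
    set ρ := ‖x - xhat‖ with hρ
    have hρr : ρ ≤ r := hxr.le
    have hball_sub : Metric.closedBall xhat ρ ⊆ Metric.closedBall xhat r :=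
      Metric.closedBall_subset_closedBall hρr
    have htaylor : ‖g x - g xhat - (H x) (x - xhat)‖ ≤ (2 * L * ρ) * ‖x - xhat‖ := by
      apply (convex_closedBall xhat ρ).norm_image_sub_le_of_norm_hasFDerivWithin_le'
        (f' := fun y => H y)
        (fun y hy => (hgdiff y).hasFDerivAt.hasFDerivWithinAt)
        (fun y hy => ?_)
        (Metric.mem_closedBall_self (norm_nonneg _))
        (by rw [Metric.mem_closedBall, dist_eq_norm])
      have hyr : y ∈ Metric.closedBall xhat r := hball_sub hy
      calc ‖H y - H x‖ ≤ L * ‖y - x‖ := hlip y hyr x hxball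
        _ ≤ L * (‖y - xhat‖ + ‖xhat - x‖) := by
            apply mul_le_mul_of_nonneg_left _ hL.le
            calc ‖y - x‖ = ‖(y - xhat) + (xhat - x)‖ := by abel_nf
              _ ≤ ‖y - xhat‖ + ‖xhat - x‖ := norm_add_le _ _
        _ ≤ 2 * L * ρ := by
            have h1 : ‖y - xhat‖ ≤ ρ := by
              rw [Metric.mem_closedBall, dist_eq_norm] at hy; exact hy
            have h2 : ‖xhat - x‖ = ρ := by rw [norm_sub_rev]
            nlinarith
    rw [hstat, sub_zero] at htaylor
    have hkey2 : H x (x - xhat - s) = -(g x - H x (x - xhat)) := by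
      rw [map_sub, hs]; abel
    have h5 : ‖x - s - xhat‖ ≤ 2 * K * ‖H x (x - xhat - s)‖ := by
      have : x - s - xhat = x - xhat - s := by abel
      rw [this]; exact hlow _
    rw [hkey2, norm_neg] at h5
    have h6 : ‖g x - H x (x - xhat)‖ ≤ 2 * L * ρ * ρ := htaylor
    calc ‖x - s - xhat‖ ≤ 2 * K * (2 * L * ρ * ρ) := by
          refine h5.trans (mul_le_mul_of_nonneg_left h6 (by positivity))
      _ = 4 * K * L * ‖x - xhat‖ ^ 2 := by rw [hρ]; ring
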